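/- arXiv:2008.07277 — 4 statements merged into one kernel-verified Lean document; each statement's English description precedes it below -/
import Mathlib

section
/- Let n ≥ 1 be a natural number, and let β, h, α_prev be real numbers, λ : Fin n → ℝ a family of regularization coefficients (one per ancestor level), and α̂ : Fin n → ℝ the virtual learning rates of the n ancestor levels. Define the virtual leaf learning rate α̂_L = α_prev + β·h, and define the regularized leaf update under the virtual approximation by α* = α_prev − β·(−h + ∑_{j : Fin n} 2·λ j·(α̂_L − α̂ j)). Set γ_L = 1 − 2·β·∑_{j} λ j and γ j = 2·β·λ j for each j : Fin n. Then α* = γ_L·α̂_L + ∑_{j} γ j·α̂ j, and γ_L + ∑_{j} γ j = 1. In other words, under the virtual approximation, adding pairwise L2 regularization between the leaf learning rate and each of its ancestors is equivalent to taking a weighted linear combination of the virtual learning rates at the different levels, with combination weights summing to 1. -/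
/-- Under the virtual approximation, adding pairwise L2 regularization between the leaf
learning rate and each of its `n` ancestors is equivalent to taking a weighted linear
combination of the virtual learning rates at the different levels, with weights summing to 1. -/
theorem cam_hd_regularization_as_combination
    (n : ℕ) (hn : 1 ≤ n) (β h α_prev : ℝ) (lam : Fin n → ℝ) (αhat : Fin n → ℝ)
    (αhatL : ℝ) (hαhatL : αhatL = α_prev + β * h)
    (αstar : ℝ)
    (hαstar : αstar = α_prev - β * (-h + ∑ j : Fin n, 2 * lam j * (αhatL - αhat j)))
    (γL : ℝ) (hγL : γL = 1 - 2 * β * ∑ j : Fin n, lam j)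
    (γ : Fin n → ℝ) (hγ : ∀ j : Fin n, γ j = 2 * β * lam j) :
    αstar = γL * αhatL + ∑ j : Fin n, γ j * αhat j ∧ γL + ∑ j : Fin n, γ j = 1 := by
  subst hαhatL hαstar hγL
  have e1 : ∑ j : Fin n, 2 * lam j * (α_prev + β * h - αhat j)
      = 2 * (α_prev + β * h) * (∑ j : Fin n, lam j) - 2 * ∑ j : Fin n, lam j * αhat j := by
    rw [Finset.mul_sum, Finset.mul_sum, ← Finset.sum_sub_distrib]
    exact Finset.sum_congr rfl fun j _ => by ring
  have e2 : ∑ j : Fin n, γ j * αhat j = 2 * β * ∑ j : Fin n, lam j * αhat j := by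
    rw [Finset.mul_sum]
    exact Finset.sum_congr rfl fun j _ => by rw [hγ]; ring
  have e3 : ∑ j : Fin n, γ j = 2 * β * ∑ j : Fin n, lam j := by
    rw [Finset.mul_sum]
    exact Finset.sum_congr rfl fun j _ => hγ j
  rw [e1, e2, e3]
  constructor <;> ring
end

section
/- Let β, λ, α_prev, h, α_g be real numbers with 1 + 2·β·λ ≠ 0. Define the virtual layer-wise learning rate α̂ = α_prev + β·h and take the virtual global rate equal to α_g. Let α be the exact solution of the implicit regularized update α = α_prev + β·h − 2·β·λ·(α − α_g), and let α* = α̂ − 2·β·λ·(α̂ − α_g) be the update obtained via the virtual approximation. Then α* − α = −4·β²·λ²·(α − α_g). In particular, the error of the virtual approximation vanishes as 4·β²·λ² → 0 or as α approaches α_g. -/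
/-- The error of the virtual approximation of the regularized layer-wise
learning-rate update equals `−4β²λ²(α − α_g)`. -/
theorem virtual_approximation_error
    (β lam α_prev h α_g : ℝ) (hden : 1 + 2 * β * lam ≠ 0)
    (αhat : ℝ) (hαhat : αhat = α_prev + β * h)
    (α : ℝ) (himp : α = α_prev + β * h - 2 * β * lam * (α - α_g))
    (αstar : ℝ) (hαstar : αstar = αhat - 2 * β * lam * (αhat - α_g)) :
    αstar - α = -4 * β ^ 2 * lam ^ 2 * (α - α_g) := by
  have hhat : αhat = α + 2 * β * lam * (α - α_g) := by
    rw [hαhat]; linarith [himp]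
  rw [hαstar, hhat]; ring
end

section
/- Let ι be a finite index type, f : EuclideanSpace ℝ ι → ℝ a differentiable function, θ' ∈ EuclideanSpace ℝ ι a previous iterate, and s ⊆ ι a set of coordinates (a parameter group). Define the group update θ(α) ∈ EuclideanSpace ℝ ι by θ(α)_j = θ'_j − α·(gradient f θ')_j for j ∈ s and θ(α)_j = θ'_j for j ∉ s. Then for every α₀ ∈ ℝ, the function α ↦ f(θ(α)) has derivative at α₀ equal to −∑_{j ∈ s} (gradient f (θ(α₀)))_j · (gradient f θ')_j. That is, the hyper-gradient of the objective with respect to the group-wise learning rate α_i equals −∇_{θ_i} f(θ_{t−1})ᵀ ∇_{θ_i} f(θ_{t−2}). -/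
open Gradient

/-- The hyper-gradient of the objective with respect to a group-wise learning rate
equals `−∇_{θ_i} f(θ_{t−1})ᵀ ∇_{θ_i} f(θ_{t−2})`. -/
theorem hypergradient_of_groupwise_learning_rate
    {ι : Type*} [Fintype ι] [DecidableEq ι]
    (f : EuclideanSpace ℝ ι → ℝ) (hf : Differentiable ℝ f)
    (θ' : EuclideanSpace ℝ ι) (s : Finset ι)
    (θ : ℝ → EuclideanSpace ℝ ι)
    (hθ : ∀ α : ℝ, ∀ j : ι,
      θ α j = if j ∈ s then θ' j - α * (gradient f θ') j else θ' j)
    (α₀ : ℝ) :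
    HasDerivAt (fun α : ℝ => f (θ α))
      (-(∑ j ∈ s, (gradient f (θ α₀)) j * (gradient f θ') j)) α₀ := by
  set v : EuclideanSpace ℝ ι := WithLp.toLp 2 (fun j => if j ∈ s then (gradient f θ') j else 0) with hv
  have hθeq : ∀ α : ℝ, θ α = θ' - α • v := by
    intro α
    ext j
    rw [hθ α j]
    show _ = θ' j - α * v j
    by_cases h : j ∈ s <;> simp [hv, h]
  have hθd : HasDerivAt θ (-v) α₀ := by
    have : HasDerivAt (fun α : ℝ => θ' - α • v) (-v) α₀ := by
      have h1 : HasDerivAt (fun α : ℝ => α • v) ((1 : ℝ) • v) α₀ :=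
        (hasDerivAt_id α₀).smul_const v
      simpa using (h1.const_sub θ')
    convert this using 1
    funext α; exact hθeq α
  have hgrad : HasGradientAt f (gradient f (θ α₀)) (θ α₀) :=
    (hf (θ α₀)).hasGradientAt
  have hcomp : HasDerivAt (fun α : ℝ => f (θ α))
      (inner ℝ (gradient f (θ α₀)) (-v) : ℝ) α₀ := by
    have := hgrad.hasFDerivAt.comp_hasDerivAt α₀ hθd
    exact this
  convert hcomp using 1
  rw [inner_neg_right]
  congr 1
  rw [PiLp.inner_apply]
  simp only [hv, RCLike.inner_apply, conj_trivial, mul_ite, mul_zero, ite_mul, zero_mul]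
  rw [Finset.sum_ite_mem, Finset.univ_inter]
  exact Finset.sum_congr rfl fun _ _ => mul_comm _ _
end

section
/- Let E = EuclideanSpace ℝ (Fin n), let f : E → ℝ be convex and differentiable with gradient L-Lipschitz for some L > 0 (i.e., ‖gradient f x − gradient f y‖ ≤ L·‖x − y‖ for all x, y), and suppose f has a unique global minimizer θ* ∈ E. Let κ : ℕ → ℝ be a sequence of step sizes with κ_t → α∞ as t → ∞, where 0 < α∞ < 1/L. Define iterates by θ_{t+1} = θ_t − κ_t • gradient f (θ_t) from any initial point θ_0. Then θ_t → θ* as t → ∞. -/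
open Filter Topology Gradient

local notation "⟪" x ", " y "⟫" => @inner ℝ _ _ x y

variable {E : Type*} [NormedAddCommGroup E] [InnerProductSpace ℝ E] [CompleteSpace E]

/-- derivative of f along a line -/
lemma hasDerivAt_line (f : E → ℝ) (hdiff : Differentiable ℝ f) (x v : E) (t : ℝ) :
    HasDerivAt (fun s : ℝ => f (x + s • v)) ⟪gradient f (x + t • v), v⟫ t := by
  have h2 : HasDerivAt (fun s : ℝ => x + s • v) v t := by
    simpa using ((hasDerivAt_id t).smul_const v).const_add x
  have h1 : HasFDerivAt f ((InnerProductSpace.toDual ℝ E) (gradient f (x + t • v)))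
      (x + t • v) :=
    hasGradientAt_iff_hasFDerivAt.mp (hdiff (x + t • v)).hasGradientAt
  simpa [InnerProductSpace.toDual_apply_apply, Function.comp_def] using (h1.comp_hasDerivAt t h2)

/-- gradient inequality for convex functions -/
lemma convex_grad_ineq (f : E → ℝ) (hconv : ConvexOn ℝ Set.univ f)
    (hdiff : Differentiable ℝ f) (x y : E) :
    f x + ⟪gradient f x, y - x⟫ ≤ f y := by
  set v := y - x with hv
  set g : ℝ → ℝ := fun s => f (x + s • v) with hg
  have hd : HasDerivAt g ⟪gradient f x, v⟫ 0 := by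
    simpa using hasDerivAt_line f hdiff x v 0
  have hslope : Tendsto (slope g 0) (𝓝[>] 0) (𝓝 ⟪gradient f x, v⟫) :=
    (hasDerivAt_iff_tendsto_slope.mp hd).mono_left
      (nhdsWithin_mono _ fun t ht => ne_of_gt ht)
  have hev : ∀ᶠ t in 𝓝[>] (0:ℝ), slope g 0 t ≤ f y - f x := by
    filter_upwards [Ioo_mem_nhdsGT_of_mem (Set.left_mem_Ico.mpr one_pos)] with t ht
    have h01 : (0:ℝ) < t := ht.1
    have h1 : t ≤ 1 := le_of_lt ht.2
    have hcomb := hconv.2 (Set.mem_univ x) (Set.mem_univ y)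
      (by linarith : (0:ℝ) ≤ 1 - t) (le_of_lt h01) (by ring)
    have hxt : (1 - t) • x + t • y = x + t • v := by
      simp [hv, smul_sub, sub_smul]
      abel
    rw [hxt] at hcomb
    have hgt : g t - g 0 ≤ t * (f y - f x) := by
      simp only [hg, zero_smul, add_zero, smul_eq_mul] at hcomb ⊢
      nlinarith
    have hs : slope g 0 t = (g t - g 0) / t := by
      rw [slope_def_field]; rw [sub_zero]
    rw [hs, div_le_iff₀ h01]
    nlinarith
  have := le_of_tendsto hslope hev
  linarith

lemma gradient_lipschitz_continuous (f : E → ℝ) {L : ℝ}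
    (hlip : ∀ x y : E, ‖gradient f x - gradient f y‖ ≤ L * ‖x - y‖) :
    Continuous (fun x => gradient f x) := by
  have : LipschitzWith (Real.toNNReal L) (fun x => gradient f x) := by
    apply LipschitzWith.of_dist_le_mul
    intro x y
    rw [dist_eq_norm, dist_eq_norm]
    calc ‖gradient f x - gradient f y‖ ≤ L * ‖x - y‖ := hlip x y
      _ ≤ Real.toNNReal L * ‖x - y‖ := by
          gcongr; exact Real.le_coe_toNNReal L
  exact this.continuous

/-- descent lemma -/
lemma descent_lemma (f : E → ℝ) (hdiff : Differentiable ℝ f) {L : ℝ} (hL : 0 < L)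
    (hlip : ∀ x y : E, ‖gradient f x - gradient f y‖ ≤ L * ‖x - y‖) (x y : E) :
    f y ≤ f x + ⟪gradient f x, y - x⟫ + L / 2 * ‖y - x‖ ^ 2 := by
  set v := y - x with hv
  set g : ℝ → ℝ := fun s => f (x + s • v) with hg
  set G : ℝ → ℝ := fun s => ⟪gradient f (x + s • v), v⟫ with hG
  have hcont : Continuous G :=
    ((gradient_lipschitz_continuous f hlip).comp
      (by continuity : Continuous fun s : ℝ => x + s • v)).inner continuous_const
  have hftc : ∫ t in (0:ℝ)..1, G t = g 1 - g 0 := by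
    apply intervalIntegral.integral_eq_sub_of_hasDerivAt
    · intro t _
      exact hasDerivAt_line f hdiff x v t
    · exact hcont.intervalIntegrable 0 1
  have hbound : ∀ t ∈ Set.Icc (0:ℝ) 1, G t ≤ ⟪gradient f x, v⟫ + L * t * ‖v‖ ^ 2 := by
    intro t ht
    have h1 : G t - ⟪gradient f x, v⟫ = ⟪gradient f (x + t • v) - gradient f x, v⟫ := by
      rw [inner_sub_left]
    have h2 : ⟪gradient f (x + t • v) - gradient f x, v⟫ ≤ L * t * ‖v‖ ^ 2 := by
      calc ⟪gradient f (x + t • v) - gradient f x, v⟫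
          ≤ ‖gradient f (x + t • v) - gradient f x‖ * ‖v‖ := real_inner_le_norm _ _
        _ ≤ (L * ‖(x + t • v) - x‖) * ‖v‖ := by
            gcongr; exact hlip _ _
        _ = L * t * ‖v‖ ^ 2 := by
            rw [add_sub_cancel_left, norm_smul, Real.norm_eq_abs, abs_of_nonneg ht.1]; ring
    linarith
  have hint : ∫ t in (0:ℝ)..1, G t ≤ ∫ t in (0:ℝ)..1, (⟪gradient f x, v⟫ + L * t * ‖v‖ ^ 2) := by
    apply intervalIntegral.integral_mono_on (by norm_num)
    · exact hcont.intervalIntegrable 0 1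
    · apply Continuous.intervalIntegrable; continuity
    · intro t ht; exact hbound t ht
  have hval : ∫ t in (0:ℝ)..1, (⟪gradient f x, v⟫ + L * t * ‖v‖ ^ 2)
      = ⟪gradient f x, v⟫ + L / 2 * ‖v‖ ^ 2 := by
    rw [intervalIntegral.integral_add (by apply Continuous.intervalIntegrable; continuity)
      (by apply Continuous.intervalIntegrable; continuity)]
    simp only [intervalIntegral.integral_const, smul_eq_mul]
    have : ∫ t in (0:ℝ)..1, L * t * ‖v‖ ^ 2 = (L * ‖v‖ ^ 2) * ∫ t in (0:ℝ)..1, t := by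
      rw [← intervalIntegral.integral_const_mul]
      congr 1; funext t; ring
    rw [this, integral_id]
    ring
  have hg1 : g 1 = f y := by simp [hg, hv]
  have hg0 : g 0 = f x := by simp [hg]
  rw [hftc, hg1, hg0, hval] at hint
  linarith

/-- one-sided smooth-convex inequality -/
lemma smooth_convex_lower (f : E → ℝ) (hconv : ConvexOn ℝ Set.univ f)
    (hdiff : Differentiable ℝ f) {L : ℝ} (hL : 0 < L)
    (hlip : ∀ x y : E, ‖gradient f x - gradient f y‖ ≤ L * ‖x - y‖) (x y : E) :
    f x + ⟪gradient f x, y - x⟫ + 1 / (2 * L) * ‖gradient f y - gradient f x‖ ^ 2 ≤ f y := by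
  set a := gradient f x with ha
  set b := gradient f y with hb
  set u := b - a with hu
  set z := y - (1 / L) • u with hz
  have h1 : f x + ⟪a, z - x⟫ ≤ f z := convex_grad_ineq f hconv hdiff x z
  have h2 : f z ≤ f y + ⟪b, z - y⟫ + L / 2 * ‖z - y‖ ^ 2 := descent_lemma f hdiff hL hlip y z
  have hzy : z - y = -((1 / L) • u) := by rw [hz]; abel
  have h3 : ⟪b, z - y⟫ = -(1 / L) * ⟪b, u⟫ := by
    rw [hzy, inner_neg_right, real_inner_smul_right]; ring
  have h4 : ‖z - y‖ ^ 2 = (1 / L) ^ 2 * ‖u‖ ^ 2 := by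
    rw [hzy, norm_neg, norm_smul, Real.norm_eq_abs, abs_of_nonneg (by positivity), mul_pow]
  have h5 : ⟪a, z - x⟫ = ⟪a, y - x⟫ - (1 / L) * ⟪a, u⟫ := by
    have : z - x = (y - x) - (1 / L) • u := by rw [hz]; abel
    rw [this, inner_sub_right, real_inner_smul_right]
  have h6 : ⟪b, u⟫ - ⟪a, u⟫ = ‖u‖ ^ 2 := by
    rw [← inner_sub_left, ← hu, real_inner_self_eq_norm_sq]
  have hLne : L ≠ 0 := ne_of_gt hL
  have key : f x + ⟪a, y - x⟫ - (1 / L) * ⟪a, u⟫ ≤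
      f y - (1 / L) * ⟪b, u⟫ + L / 2 * ((1 / L) ^ 2 * ‖u‖ ^ 2) := by
    rw [h5] at h1; rw [h3, h4] at h2; linarith
  have e1 : L / 2 * ((1 / L) ^ 2 * ‖u‖ ^ 2) = 1 / (2 * L) * ‖u‖ ^ 2 := by
    field_simp
  have e2 : (1 / L) * ⟪b, u⟫ - (1 / L) * ⟪a, u⟫ = (1 / L) * ‖u‖ ^ 2 := by
    rw [← mul_sub, h6]
  have e3 : (1 / L) * ‖u‖ ^ 2 - 1 / (2 * L) * ‖u‖ ^ 2 = 1 / (2 * L) * ‖u‖ ^ 2 := by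
    field_simp; ring
  nlinarith [key, e1, e2, e3]

/-- co-coercivity -/
lemma cocoercive (f : E → ℝ) (hconv : ConvexOn ℝ Set.univ f)
    (hdiff : Differentiable ℝ f) {L : ℝ} (hL : 0 < L)
    (hlip : ∀ x y : E, ‖gradient f x - gradient f y‖ ≤ L * ‖x - y‖) (x y : E) :
    (1 / L) * ‖gradient f x - gradient f y‖ ^ 2 ≤ ⟪gradient f x - gradient f y, x - y⟫ := by
  have h1 := smooth_convex_lower f hconv hdiff hL hlip x y
  have h2 := smooth_convex_lower f hconv hdiff hL hlip y x
  have hn : ‖gradient f x - gradient f y‖ = ‖gradient f y - gradient f x‖ := by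
    rw [← norm_neg]; congr 1; abel
  have hi : ⟪gradient f x - gradient f y, x - y⟫
      = -⟪gradient f x, y - x⟫ - ⟪gradient f y, x - y⟫ := by
    simp only [inner_sub_left, inner_sub_right]
    ring
  have hLne : L ≠ 0 := ne_of_gt hL
  have : 1 / (2 * L) * ‖gradient f y - gradient f x‖ ^ 2
      + 1 / (2 * L) * ‖gradient f x - gradient f y‖ ^ 2
      = (1 / L) * ‖gradient f x - gradient f y‖ ^ 2 := by
    rw [← hn]; field_simp; ring
  linarith [h1, h2, hi, this]

/-- gradient vanishes at the global minimizer -/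
lemma gradient_eq_zero_of_min (f : E → ℝ) (w : E) (hmin : ∀ x, f w ≤ f x) :
    gradient f w = 0 := by
  have hloc : IsLocalMin f w := Filter.Eventually.of_forall hmin
  have := hloc.fderiv_eq_zero
  rw [gradient, this]
  simp


/-- Convergence of (non-stochastic) gradient descent with step sizes converging to a limit
`αinf ∈ (0, 1/L)`, for a convex `L`-smooth function with a unique global minimizer. -/
theorem gradient_descent_convergence
    (n : ℕ) (f : EuclideanSpace ℝ (Fin n) → ℝ)
    (hconv : ConvexOn ℝ Set.univ f) (hdiff : Differentiable ℝ f)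
    (L : ℝ) (hL : 0 < L)
    (hlip : ∀ x y : EuclideanSpace ℝ (Fin n),
      ‖gradient f x - gradient f y‖ ≤ L * ‖x - y‖)
    (θstar : EuclideanSpace ℝ (Fin n))
    (hmin : ∀ x : EuclideanSpace ℝ (Fin n), f θstar ≤ f x)
    (huniq : ∀ y : EuclideanSpace ℝ (Fin n),
      (∀ x : EuclideanSpace ℝ (Fin n), f y ≤ f x) → y = θstar)
    (κ : ℕ → ℝ) (αinf : ℝ) (hκ : Tendsto κ atTop (𝓝 αinf))
    (hαinfpos : 0 < αinf) (hαinflt : αinf < 1 / L)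
    (θ : ℕ → EuclideanSpace ℝ (Fin n))
    (hupd : ∀ t : ℕ, θ (t + 1) = θ t - κ t • gradient f (θ t)) :
    Tendsto θ atTop (𝓝 θstar) := by
  set g : ℕ → EuclideanSpace ℝ (Fin n) := fun t => gradient f (θ t) with hgdef
  have gstar : gradient f θstar = 0 := gradient_eq_zero_of_min f θstar hmin
  have hkey : ∀ t, (1 / L) * ‖g t‖ ^ 2 ≤ ⟪g t, θ t - θstar⟫ := by
    intro t
    have := cocoercive f hconv hdiff hL hlip (θ t) θstar
    simpa [gstar, hgdef] using this
  have hexp : ∀ t, ‖θ (t + 1) - θstar‖ ^ 2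
      = ‖θ t - θstar‖ ^ 2 - 2 * (κ t * ⟪g t, θ t - θstar⟫) + (κ t) ^ 2 * ‖g t‖ ^ 2 := by
    intro t
    have h1 : θ (t + 1) - θstar = (θ t - θstar) - κ t • g t := by rw [hupd t]; abel
    rw [h1, norm_sub_sq_real, real_inner_smul_right, norm_smul, Real.norm_eq_abs,
      mul_pow, sq_abs, real_inner_comm]
  -- step size window
  set β := (αinf + 1 / L) / 2 with hβdef
  have hβ1 : αinf < β := by rw [hβdef]; linarith
  have hβ2 : β < 1 / L := by rw [hβdef]; linarith
  have h1L : 0 < 1 / L := by positivity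
  have hβ2L : β < 2 / L := by
    have : (1:ℝ) / L < 2 / L := by rw [div_lt_div_iff₀ hL hL]; nlinarith
    linarith
  obtain ⟨T, hT⟩ : ∃ T, ∀ t, T ≤ t → κ t ∈ Set.Ioo (αinf / 2) β := by
    have hev : ∀ᶠ t in atTop, κ t ∈ Set.Ioo (αinf / 2) β :=
      hκ (Ioo_mem_nhds (by linarith) hβ1)
    exact eventually_atTop.mp hev
  set c := (αinf / 2) * (2 / L - β) with hcdef
  have hcpos : 0 < c := by
    apply mul_pos (by linarith) (by linarith)
  -- one-step decrease
  have hstep : ∀ t, T ≤ t → ‖θ (t + 1) - θstar‖ ^ 2 + c * ‖g t‖ ^ 2 ≤ ‖θ t - θstar‖ ^ 2 := by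
    intro t ht
    obtain ⟨hκ1, hκ2⟩ := hT t ht
    have hκpos : 0 < κ t := lt_trans (by linarith) hκ1
    have hgnn : (0:ℝ) ≤ ‖g t‖ ^ 2 := by positivity
    have h1 : c ≤ κ t * (2 / L - κ t) :=
      mul_le_mul hκ1.le (by linarith) (by linarith) hκpos.le
    have hA : 2 * κ t * ((1 / L) * ‖g t‖ ^ 2) ≤ 2 * κ t * ⟪g t, θ t - θstar⟫ :=
      mul_le_mul_of_nonneg_left (hkey t) (by linarith)
    have hB : c * ‖g t‖ ^ 2 ≤ (κ t * (2 / L - κ t)) * ‖g t‖ ^ 2 :=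
      mul_le_mul_of_nonneg_right h1 hgnn
    have he := hexp t
    have hLne : L ≠ 0 := ne_of_gt hL
    have hexpand : (κ t * (2 / L - κ t)) * ‖g t‖ ^ 2
        = 2 * κ t * ((1 / L) * ‖g t‖ ^ 2) - (κ t) ^ 2 * ‖g t‖ ^ 2 := by
      field_simp
    linarith [hB, hA, he, hexpand.le, hexpand.ge]
  -- monotonicity of distances past T
  have hmono : ∀ s t : ℕ, T ≤ s → s ≤ t → ‖θ t - θstar‖ ^ 2 ≤ ‖θ s - θstar‖ ^ 2 := by
    intro s t hTs hst
    induction t with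
    | zero =>
        have : s = 0 := Nat.le_zero.mp hst
        rw [this]
    | succ t ih =>
        rcases Nat.lt_or_ge s (t + 1) with h | h
        · have hst' : s ≤ t := Nat.lt_succ_iff.mp h
          have h2 := hstep t (le_trans hTs hst')
          have h3 : (0:ℝ) ≤ c * ‖g t‖ ^ 2 := by positivity
          linarith [ih hst']
        · have : s = t + 1 := le_antisymm hst h
          rw [this]
  -- summability of gradient norms
  have hsum : ∀ m, (∑ i ∈ Finset.range m, c * ‖g (T + i)‖ ^ 2)
      + ‖θ (T + m) - θstar‖ ^ 2 ≤ ‖θ T - θstar‖ ^ 2 := by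
    intro m
    induction m with
    | zero => simp
    | succ m ih =>
        rw [Finset.sum_range_succ]
        have h2 := hstep (T + m) (Nat.le_add_right T m)
        have hTm : T + (m + 1) = (T + m) + 1 := rfl
        rw [hTm]
        linarith
  have hsummable : Summable (fun i => c * ‖g (T + i)‖ ^ 2) := by
    apply summable_of_sum_range_le (c := ‖θ T - θstar‖ ^ 2) (fun i => by positivity)
    intro m
    have h1 := hsum m
    have h2 : (0:ℝ) ≤ ‖θ (T + m) - θstar‖ ^ 2 := by positivity
    linarith
  have hgz1 : Tendsto (fun i => ‖g (T + i)‖ ^ 2) atTop (𝓝 0) := by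
    have h0 := hsummable.tendsto_atTop_zero
    have h1 := h0.const_mul c⁻¹
    simp only [← mul_assoc, inv_mul_cancel₀ hcpos.ne', one_mul, mul_zero] at h1
    exact h1
  have hgz2 : Tendsto (fun i => g (T + i)) atTop (𝓝 0) := by
    rw [tendsto_zero_iff_norm_tendsto_zero]
    have hsq : Tendsto (fun i => Real.sqrt (‖g (T + i)‖ ^ 2)) atTop (𝓝 (Real.sqrt 0)) :=
      (Real.continuous_sqrt.tendsto 0).comp hgz1
    have heq : (fun i => Real.sqrt (‖g (T + i)‖ ^ 2)) = fun i => ‖g (T + i)‖ := by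
      funext i; exact Real.sqrt_sq (norm_nonneg _)
    rw [heq, Real.sqrt_zero] at hsq
    exact hsq
  -- compactness: extract convergent subsequence
  set R := ‖θ T - θstar‖ with hRdef
  have hball : ∀ k, θ (T + k) ∈ Metric.closedBall θstar R := by
    intro k
    rw [Metric.mem_closedBall, dist_eq_norm]
    have h1 := hmono T (T + k) le_rfl (Nat.le_add_right _ _)
    nlinarith [norm_nonneg (θ (T + k) - θstar), norm_nonneg (θ T - θstar)]
  obtain ⟨z, _, φ, hφmono, hφtend⟩ :=
    (isCompact_closedBall θstar R).tendsto_subseq hball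
  have hgzz : gradient f z = 0 := by
    have h1 : Tendsto (fun k => gradient f (θ (T + φ k))) atTop (𝓝 (gradient f z)) := by
      have hc := (gradient_lipschitz_continuous f hlip).tendsto z
      exact hc.comp hφtend
    have h2 : Tendsto (fun k => gradient f (θ (T + φ k))) atTop (𝓝 0) := by
      have := hgz2.comp hφmono.tendsto_atTop
      simpa [Function.comp_def, hgdef] using this
    exact tendsto_nhds_unique h1 h2
  have hzstar : z = θstar := by
    apply huniq
    intro w
    have h1 := convex_grad_ineq f hconv hdiff z w
    simpa [hgzz] using h1
  -- conclude
  have hφt' : Tendsto (fun k => θ (T + φ k)) atTop (𝓝 θstar) := by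
    rw [← hzstar]
    exact hφtend
  have hnk : Tendsto (fun k => ‖θ (T + φ k) - θstar‖) atTop (𝓝 0) :=
    tendsto_iff_norm_sub_tendsto_zero.mp hφt'
  have hnk2 : Tendsto (fun k => ‖θ (T + φ k) - θstar‖ ^ 2) atTop (𝓝 0) := by
    have := hnk.pow 2
    simpa using this
  rw [Metric.tendsto_atTop]
  intro ε hε
  have hev2 : ∀ᶠ k in atTop, ‖θ (T + φ k) - θstar‖ ^ 2 < ε ^ 2 :=
    hnk2.eventually (gt_mem_nhds (by positivity))
  obtain ⟨k, hk⟩ := hev2.exists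
  refine ⟨T + φ k, fun t ht => ?_⟩
  rw [dist_eq_norm]
  have h1 := hmono (T + φ k) t (Nat.le_add_right _ _) ht
  nlinarith [norm_nonneg (θ t - θstar)]
end
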